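/- arXiv:2512.09999 — 2 statements merged into one kernel-verified Lean document; each statement's English description precedes it below -/
import Mathlib

section
/- Let N ≥ 1, d = 2^N, S = σ_z^{⊗N}, and let 𝒰_{Z2}(2^N) be the set of d×d unitaries F with FS = SF or FS = −SF. If a d×d complex matrix A satisfies AF = FA for every F ∈ 𝒰_{Z2}(2^N), then A = λ·I for some complex scalar λ; that is, the commutant of 𝒰_{Z2}(2^N) consists only of scalar multiples of the identity. -/
open Matrix
open scoped Kronecker

noncomputable section

/-- Index type of the `N`-qubit Hilbert space `ℂ^(2^N)`. -/
abbrev QIdx (N : ℕ) := Fin N → Fin 2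

/-- `σ_z^{⊗N}`: the `N`-fold Kronecker power of `diag(1, -1)`. -/
def Smat (N : ℕ) : Matrix (QIdx N) (QIdx N) ℂ :=
  Matrix.diagonal fun x => ∏ i, (-1 : ℂ) ^ (x i : ℕ)

/-- `𝒰_{Z2}(2^N)`: the set of unitaries commuting or anticommuting with `σ_z^{⊗N}`. -/
def Z2Set (N : ℕ) : Set (Matrix.unitaryGroup (QIdx N) ℂ) :=
  {F | (F : Matrix (QIdx N) (QIdx N) ℂ) * Smat N = Smat N * (F : Matrix (QIdx N) (QIdx N) ℂ) ∨
       (F : Matrix (QIdx N) (QIdx N) ℂ) * Smat N = -(Smat N * (F : Matrix (QIdx N) (QIdx N) ℂ))}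

-- sign diagonal matrix
lemma aux_diag_mem (N : ℕ) (z : QIdx N) :
    Matrix.diagonal (fun w => if w = z then (-1 : ℂ) else 1) ∈ Matrix.unitaryGroup (QIdx N) ℂ := by
  rw [Matrix.mem_unitaryGroup_iff]
  rw [Matrix.star_eq_conjTranspose, Matrix.diagonal_conjTranspose]
  rw [Matrix.diagonal_mul_diagonal]
  ext a b
  rcases eq_or_ne a b with rfl | hab
  · rw [Matrix.diagonal_apply_eq, Matrix.one_apply_eq]
    by_cases h : a = z <;> simp [h]
  · rw [Matrix.diagonal_apply_ne _ hab, Matrix.one_apply_ne hab]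

-- flip map
def flipAt {N : ℕ} (i : Fin N) (x : QIdx N) : QIdx N := Function.update x i (x i + 1)

lemma flipAt_invol {N : ℕ} (i : Fin N) (x : QIdx N) : flipAt i (flipAt i x) = x := by
  funext j
  by_cases h : j = i
  · subst h
    simp [flipAt, Function.update_self]
    revert x
    intro x
    have : ∀ a : Fin 2, a + 1 + 1 = a := by decide
    exact this (x j)
  · simp [flipAt, Function.update_of_ne h]

def Pflip {N : ℕ} (i : Fin N) : Matrix (QIdx N) (QIdx N) ℂ :=
  Matrix.of fun a b => if a = flipAt i b then 1 else 0

lemma Pflip_mul_left {N : ℕ} (i : Fin N) (M : Matrix (QIdx N) (QIdx N) ℂ) (a b : QIdx N) :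
    (Pflip i * M) a b = M (flipAt i a) b := by
  rw [Matrix.mul_apply]
  rw [Finset.sum_eq_single (flipAt i a)]
  · simp [Pflip, flipAt_invol]
  · intro c _ hc
    have : a ≠ flipAt i c := by
      intro h
      apply hc
      rw [h, flipAt_invol]
    simp [Pflip, this]
  · intro h
    exact absurd (Finset.mem_univ _) h

lemma Pflip_mul_right {N : ℕ} (i : Fin N) (M : Matrix (QIdx N) (QIdx N) ℂ) (a b : QIdx N) :
    (M * Pflip i) a b = M a (flipAt i b) := by
  rw [Matrix.mul_apply]
  rw [Finset.sum_eq_single (flipAt i b)]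
  · simp [Pflip, flipAt_invol]
  · intro c _ hc
    have : ¬ (c = flipAt i b) := hc
    simp [Pflip, this]
  · intro h
    exact absurd (Finset.mem_univ _) h

lemma Pflip_unitary {N : ℕ} (i : Fin N) : Pflip i ∈ Matrix.unitaryGroup (QIdx N) ℂ := by
  rw [Matrix.mem_unitaryGroup_iff]
  have hstar : star (Pflip i) = Pflip i := by
    ext a b
    simp only [Matrix.star_apply, Pflip, Matrix.of_apply]
    have : (b = flipAt i a) ↔ (a = flipAt i b) := by
      constructor <;> intro h <;> rw [h, flipAt_invol]
    by_cases h : a = flipAt i b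
    · rw [if_pos h, if_pos (this.mpr h)]; simp
    · rw [if_neg h, if_neg (fun hh => h (this.mp hh))]; simp
  rw [hstar]
  ext a b
  rw [Pflip_mul_left]
  by_cases h : a = b
  · subst h; simp [Pflip, flipAt_invol]
  · have : flipAt i a ≠ flipAt i b := by
      intro hh
      apply h
      have := congrArg (flipAt i) hh
      rwa [flipAt_invol, flipAt_invol] at this
    simp [Pflip, Matrix.one_apply, h, this]

lemma flip_sign {N : ℕ} (i : Fin N) (x : QIdx N) :
    (∏ j, (-1 : ℂ) ^ ((flipAt i x j : Fin 2) : ℕ)) = -∏ j, (-1 : ℂ) ^ ((x j : Fin 2) : ℕ) := by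
  rw [← Finset.mul_prod_erase Finset.univ
        (fun j => (-1 : ℂ) ^ ((flipAt i x j : Fin 2) : ℕ)) (Finset.mem_univ i),
      ← Finset.mul_prod_erase Finset.univ
        (fun j => (-1 : ℂ) ^ ((x j : Fin 2) : ℕ)) (Finset.mem_univ i),
      ← neg_mul]
  have hrest : ∀ j ∈ Finset.univ.erase i,
      (-1 : ℂ) ^ ((flipAt i x j : Fin 2) : ℕ) = (-1 : ℂ) ^ ((x j : Fin 2) : ℕ) := by
    intro j hj
    rw [flipAt, Function.update_of_ne (Finset.mem_erase.mp hj).1]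
  rw [Finset.prod_congr rfl hrest]
  congr 1
  rw [flipAt, Function.update_self]
  have : ∀ a : Fin 2, (-1 : ℂ) ^ ((a + 1 : Fin 2) : ℕ) = -(-1 : ℂ) ^ (a : ℕ) := by
    intro a
    match a with
    | 0 => rw [show ((0 : Fin 2) + 1) = 1 from rfl]; norm_num
    | 1 => rw [show ((1 : Fin 2) + 1) = 0 from rfl]; norm_num
  exact this (x i)

lemma Pflip_mem_Z2 {N : ℕ} (i : Fin N) :
    (⟨Pflip i, Pflip_unitary i⟩ : Matrix.unitaryGroup (QIdx N) ℂ) ∈ Z2Set N := by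
  right
  ext a b
  rw [Smat, Matrix.neg_apply, Matrix.mul_diagonal, Matrix.diagonal_mul]
  simp only [Pflip, Matrix.of_apply]
  by_cases h : a = flipAt i b
  · subst h
    simp [flip_sign]
  · simp [h]


/-- The commutant of `𝒰_{Z2}(2^N)` is trivial: any matrix `A`
commuting with every element of `𝒰_{Z2}(2^N)` is a scalar multiple of the identity. -/
theorem Z2Set_commutant_trivial (N : ℕ) (hN : 1 ≤ N)
    (A : Matrix (QIdx N) (QIdx N) ℂ)
    (hA : ∀ F ∈ Z2Set N,
      A * (F : Matrix (QIdx N) (QIdx N) ℂ) = (F : Matrix (QIdx N) (QIdx N) ℂ) * A) :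
    ∃ c : ℂ, A = c • (1 : Matrix (QIdx N) (QIdx N) ℂ) := by
  -- step 1: A is diagonal
  have hdiag : ∀ x z : QIdx N, x ≠ z → A x z = 0 := by
    intro x z hxz
    set D : Matrix (QIdx N) (QIdx N) ℂ :=
      Matrix.diagonal (fun w => if w = z then (-1 : ℂ) else 1) with hD
    have hmem : (⟨D, aux_diag_mem N z⟩ : Matrix.unitaryGroup (QIdx N) ℂ) ∈ Z2Set N := by
      left
      rw [Smat]
      show D * _ = _ * D
      rw [hD, Matrix.diagonal_mul_diagonal, Matrix.diagonal_mul_diagonal]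
      exact congrArg _ (funext fun w => mul_comm _ _)
    have hc := hA _ hmem
    have := congrFun (congrFun hc x) z
    show A x z = 0
    rw [show ((⟨D, aux_diag_mem N z⟩ : Matrix.unitaryGroup (QIdx N) ℂ) : Matrix (QIdx N) (QIdx N) ℂ) = D from rfl] at this
    rw [hD] at this
    rw [Matrix.mul_diagonal, Matrix.diagonal_mul] at this
    simp only [if_neg hxz, eq_self_iff_true, if_true] at this
    -- this : A x z * (-1) = 1 * A x z
    have : A x z * (-1) = A x z := by rw [this]; ring
    linear_combination this / (-2)
  -- step 2: diagonal entries equal under single flip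
  have hflip : ∀ (i : Fin N) (x : QIdx N), A x x = A (flipAt i x) (flipAt i x) := by
    intro i x
    have hc := hA _ (Pflip_mem_Z2 i)
    have := congrFun (congrFun hc x) (flipAt i x)
    rw [show ((⟨Pflip i, Pflip_unitary i⟩ : Matrix.unitaryGroup (QIdx N) ℂ) : Matrix (QIdx N) (QIdx N) ℂ) = Pflip i from rfl] at this
    rw [Pflip_mul_right, Pflip_mul_left, flipAt_invol] at this
    exact this
  -- step 3: all diagonal entries equal
  have hall : ∀ x y : QIdx N, A x x = A y y := by
    have key : ∀ (t : Finset (Fin N)) (x : QIdx N),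
        A x x = A (fun i => if i ∈ t then x i + 1 else x i)
                  (fun i => if i ∈ t then x i + 1 else x i) := by
      intro t
      induction t using Finset.induction_on with
      | empty => intro x; simp
      | @insert a t ha ih =>
        intro x
        have h1 := hflip a x
        have h2 := ih (flipAt a x)
        rw [h1, h2]
        congr 1 <;>
        · funext i
          by_cases hi : i = a
          · subst hi
            simp [ha, flipAt, Function.update_self]
          · simp [hi, flipAt, Function.update_of_ne hi]
    intro x y
    have := key (Finset.univ.filter (fun i => x i ≠ y i)) x
    convert this using 2 <;>
    · funext i
      by_cases h : x i = y i
      · simp [h]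
      · have : y i = x i + 1 := by
          revert h
          have : ∀ a b : Fin 2, a ≠ b → b = a + 1 := by decide
          exact this (x i) (y i)
        simp [h, this]
  refine ⟨A (fun _ => 0) (fun _ => 0), ?_⟩
  ext a b
  by_cases h : a = b
  · subst h
    simp [Matrix.one_apply, hall a (fun _ => 0)]
  · simp [Matrix.one_apply, h, hdiag a b h]
end
end

section
/- Let N ≥ 1, d = 2^N, S = σ_z^{⊗N}, Z_0 = (I+S)/2, Z_1 = (I−S)/2, and Π^{(2)} = (I + SWAP)/2 on C^d ⊗ C^d. Then Tr((Z_0⊗Z_0)Π^{(2)}) = Tr((Z_1⊗Z_1)Π^{(2)}) = 2^{N−1}(2^{N−1}+1)/2, and consequently 1 − [Tr((Z_0⊗Z_0)Π^{(2)}) + Tr((Z_1⊗Z_1)Π^{(2)})] / Tr(Π^{(2)}) = 2^N/(2(2^N + 1)). -/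
open Matrix
open scoped Kronecker

noncomputable section

/-- `Z_0 = (I + S)/2` and `Z_1 = (I - S)/2`. -/
def Zproj (N : ℕ) (s : Fin 2) : Matrix (QIdx N) (QIdx N) ℂ :=
  (2 : ℂ)⁻¹ • (1 + (-1 : ℂ) ^ (s : ℕ) • Smat N)

/-- The flip (SWAP) operator on `ℂ^d ⊗ ℂ^d`. -/
def swapMat (ι : Type*) [DecidableEq ι] : Matrix (ι × ι) (ι × ι) ℂ :=
  fun p q => if p.1 = q.2 ∧ p.2 = q.1 then 1 else 0

/-- `Π^{(2)} = (I + SWAP)/2`. -/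
def Pi2 (N : ℕ) : Matrix (QIdx N × QIdx N) (QIdx N × QIdx N) ℂ :=
  (2 : ℂ)⁻¹ • (1 + swapMat (QIdx N))

lemma trace_kron_swap {ι : Type*} [Fintype ι] [DecidableEq ι] (A B : Matrix ι ι ℂ) :
    Matrix.trace ((A ⊗ₖ B) * swapMat ι) = Matrix.trace (A * B) := by
  simp [Matrix.trace, Matrix.mul_apply, Matrix.diag, swapMat, Fintype.sum_prod_type,
    kroneckerMap_apply, ite_and, Finset.mul_sum]

lemma trace_swap {ι : Type*} [Fintype ι] [DecidableEq ι] :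
    Matrix.trace (swapMat ι) = Fintype.card ι := by
  have h : Matrix.trace (swapMat ι) = ∑ a : ι, ∑ b : ι, if a = b then (1:ℂ) else 0 := by
    rw [Matrix.trace, Fintype.sum_prod_type]
    simp [Matrix.diag, swapMat, and_iff_left_iff_imp, eq_comm]
  rw [h]
  simp [Finset.sum_ite_eq]

lemma trace_Smat (N : ℕ) (hN : 1 ≤ N) : Matrix.trace (Smat N) = 0 := by
  rw [Smat, Matrix.trace_diagonal]
  have h := (Finset.prod_univ_sum (fun _ : Fin N => (Finset.univ : Finset (Fin 2)))
    (fun _ j => (-1:ℂ)^(j:ℕ))).symm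
  rw [Fintype.piFinset_univ] at h
  rw [h]
  have h2 : ∑ j : Fin 2, (-1 : ℂ) ^ (j : ℕ) = 0 := by simp [Fin.sum_univ_two]
  rw [Finset.prod_congr rfl (fun i _ => h2), Finset.prod_const]
  exact zero_pow (by simpa using by omega)

lemma Smat_sq (N : ℕ) : Smat N * Smat N = 1 := by
  rw [Smat, Matrix.diagonal_mul_diagonal]
  have : (fun i : QIdx N => (∏ j, (-1:ℂ) ^ (i j : ℕ)) * ∏ j, (-1:ℂ) ^ (i j : ℕ))
      = fun _ => (1:ℂ) := by
    funext x
    rw [← Finset.prod_mul_distrib]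
    exact Finset.prod_eq_one fun i _ => by
      rw [← pow_add]; exact Even.neg_one_pow ⟨(x i : ℕ), rfl⟩
  rw [this, Matrix.diagonal_one]

lemma card_QIdx (N : ℕ) : Fintype.card (QIdx N) = 2 ^ N := by
  simp [Fintype.card_fun]

lemma trace_Zproj (N : ℕ) (hN : 1 ≤ N) (s : Fin 2) :
    Matrix.trace (Zproj N s) = (2:ℂ) ^ (N - 1) := by
  obtain ⟨M, rfl⟩ : ∃ M, N = M + 1 := ⟨N - 1, (Nat.succ_pred_eq_of_pos hN).symm⟩
  rw [Zproj, Matrix.trace_smul, Matrix.trace_add, Matrix.trace_smul,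
    trace_Smat _ hN, Matrix.trace_one, card_QIdx]
  simp [pow_succ]
  ring

lemma Zproj_sq (N : ℕ) (s : Fin 2) : Zproj N s * Zproj N s = Zproj N s := by
  have hE : ((-1:ℂ)^(s:ℕ)) * ((-1:ℂ)^(s:ℕ)) = 1 := by
    rw [← pow_add]; exact Even.neg_one_pow ⟨(s:ℕ), rfl⟩
  simp only [Zproj, smul_mul_assoc, mul_smul_comm, smul_smul, mul_add, add_mul,
    one_mul, mul_one, Smat_sq, hE]
  have h2 : ((-1:ℂ))^((s:ℕ)*2) = 1 := Even.neg_one_pow ⟨(s:ℕ), by ring⟩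
  match_scalars <;> [linear_combination (1/4 : ℂ) * h2; ring]

lemma trace_kron_pi2 (N : ℕ) (hN : 1 ≤ N) (s : Fin 2) :
    Matrix.trace ((Zproj N s ⊗ₖ Zproj N s) * Pi2 N) =
      (2 : ℂ) ^ (N - 1) * ((2 : ℂ) ^ (N - 1) + 1) / 2 := by
  rw [Pi2, mul_smul_comm, mul_add, mul_one, Matrix.trace_smul, Matrix.trace_add,
    Matrix.trace_kronecker, trace_kron_swap, Zproj_sq, trace_Zproj N hN s]
  field_simp
  ring

lemma trace_Pi2 (N : ℕ) :
    Matrix.trace (Pi2 N) = (2:ℂ)⁻¹ * ((2:ℂ) ^ N * (2:ℂ) ^ N + (2:ℂ) ^ N) := by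
  rw [Pi2, Matrix.trace_smul, Matrix.trace_add, Matrix.trace_one, trace_swap]
  simp [card_QIdx, pow_mul]

/-- **Statement 5.** `Tr((Z_0⊗Z_0)Π^{(2)}) = Tr((Z_1⊗Z_1)Π^{(2)}) = 2^{N−1}(2^{N−1}+1)/2`,
and consequently the Haar-averaged Z2-asymmetry generating power is
`1 − [Tr((Z_0⊗Z_0)Π^{(2)}) + Tr((Z_1⊗Z_1)Π^{(2)})]/Tr(Π^{(2)}) = 2^N/(2(2^N+1))`. -/
theorem Z2_trace_constants (N : ℕ) (hN : 1 ≤ N) :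
    Matrix.trace ((Zproj N 0 ⊗ₖ Zproj N 0) * Pi2 N) =
      (2 : ℂ) ^ (N - 1) * ((2 : ℂ) ^ (N - 1) + 1) / 2 ∧
    Matrix.trace ((Zproj N 1 ⊗ₖ Zproj N 1) * Pi2 N) =
      (2 : ℂ) ^ (N - 1) * ((2 : ℂ) ^ (N - 1) + 1) / 2 ∧
    1 - (Matrix.trace ((Zproj N 0 ⊗ₖ Zproj N 0) * Pi2 N) +
          Matrix.trace ((Zproj N 1 ⊗ₖ Zproj N 1) * Pi2 N)) / Matrix.trace (Pi2 N) =
      (2 : ℂ) ^ N / (2 * ((2 : ℂ) ^ N + 1)) := by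
  refine ⟨trace_kron_pi2 N hN 0, trace_kron_pi2 N hN 1, ?_⟩
  rw [trace_kron_pi2 N hN 0, trace_kron_pi2 N hN 1, trace_Pi2 N]
  obtain ⟨M, rfl⟩ : ∃ M, N = M + 1 := ⟨N - 1, (Nat.succ_pred_eq_of_pos hN).symm⟩
  simp only [Nat.add_sub_cancel]
  have hm : (2:ℂ) ^ M ≠ 0 := pow_ne_zero _ two_ne_zero
  have h2x1 : (2:ℂ)^M * 2 + 1 ≠ 0 := by
    have : ((2 ^ (M+1) + 1 : ℕ) : ℂ) ≠ 0 := Nat.cast_ne_zero.mpr (by positivity)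
    push_cast at this
    rw [pow_succ] at this
    exact this
  rw [pow_succ]
  have hb : (2:ℂ)⁻¹ * ((2:ℂ)^M*2 * ((2:ℂ)^M*2) + (2:ℂ)^M*2) = (2:ℂ)^M * ((2:ℂ)^M*2+1) := by
    ring
  rw [hb]
  have hD : (2:ℂ)^M * ((2:ℂ)^M*2+1) ≠ 0 := mul_ne_zero hm h2x1
  field_simp
  ring
end
end
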